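/- The 5-dimensional nilpotent commutative associative algebra A₂₁ does not degenerate to A₂₀: the structure λ of A₂₀ does NOT lie in the closure of the GL(5,ℂ)-orbit O(μ) of the structure μ of A₂₁ (closure in the standard topology on the space of bilinear maps ℂ⁵ × ℂ⁵ → ℂ⁵). -/
import Mathlib


open ContinuousLinearMap

/-- The underlying space `ℂⁿ`. -/
abbrev Vn (n : ℕ) := Fin n → ℂ

/-- The space of bilinear maps `ℂⁿ × ℂⁿ → ℂⁿ` (as continuous linear maps in two
arguments), carrying its standard topology as a finite-dimensional complex vector space. -/
abbrev Bil (n : ℕ) := Vn n →L[ℂ] Vn n →L[ℂ] Vn n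

/-- The action of `GL(n, ℂ)` on bilinear maps: `(g · μ)(x, y) = g (μ (g⁻¹ x) (g⁻¹ y))`. -/
noncomputable def act {n : ℕ} (g : Vn n ≃L[ℂ] Vn n) (μ : Bil n) : Bil n :=
  ((compL ℂ (Vn n) (Vn n) (Vn n)).flip (g.symm : Vn n →L[ℂ] Vn n)).comp
    (((compL ℂ (Vn n) (Vn n) (Vn n)) (g : Vn n →L[ℂ] Vn n)).comp
      (μ.comp (g.symm : Vn n →L[ℂ] Vn n)))

@[simp] lemma act_apply {n : ℕ} (g : Vn n ≃L[ℂ] Vn n) (μ : Bil n) (x y : Vn n) :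
    act g μ x y = g (μ (g.symm x) (g.symm y)) := rfl

/-- The orbit `O(μ)` of a bilinear map under the `GL(n, ℂ)`-action. -/
noncomputable def orbit {n : ℕ} (μ : Bil n) : Set (Bil n) :=
  {ν | ∃ g : Vn n ≃L[ℂ] Vn n, ν = act g μ}

/-- The standard basis `e₁, …, e₅` of `ℂ⁵` (zero-indexed: `e i` is `e_{i+1}`). -/
def e (i : Fin 5) : Vn 5 := Pi.single i 1

/-- Multiplication table of the algebra `𝐀21` (entry `(i, j)` is `eᵢ · eⱼ`). -/
def tblA21 : Fin 5 → Fin 5 → Vn 5 :=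
  ![![0, 0, 0, e 4, 0],
   ![0, 0, e 4, 0, 0],
   ![0, e 4, 0, 0, 0],
   ![e 4, 0, 0, 0, 0],
   ![0, 0, 0, 0, 0]]

/-- Multiplication table of the algebra `𝐀20` (entry `(i, j)` is `eᵢ · eⱼ`). -/
def tblA20 : Fin 5 → Fin 5 → Vn 5 :=
  ![![e 2, e 3, 0, 0, 0],
   ![e 3, 0, 0, 0, 0],
   ![0, 0, 0, 0, 0],
   ![0, 0, 0, 0, 0],
   ![0, 0, 0, 0, 0]]

lemma basis_expand (a : Vn 5) : a = ∑ i, a i • e i := by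
  funext j
  simp [e, Finset.sum_apply, Pi.single_apply]

lemma mu_eq (μ : Bil 5) (hμ : ∀ i j : Fin 5, μ (e i) (e j) = tblA21 i j) (a b : Vn 5) :
    μ a b = (a 0 * b 3 + a 1 * b 2 + a 2 * b 1 + a 3 * b 0) • e 4 := by
  conv_lhs => rw [basis_expand a, basis_expand b]
  simp only [map_sum, map_smul, ContinuousLinearMap.sum_apply, ContinuousLinearMap.smul_apply, hμ]
  funext k
  simp [tblA21, Fin.sum_univ_five, Matrix.vecHead, Matrix.vecTail]
  ring

/-- The $5$-dimensional nilpotent commutative associative algebra `𝐀21` does not degenerate to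
`𝐀20`: the structure `λ` of `𝐀20` does NOT lie in the closure of
the `GL(5, ℂ)`-orbit `O(μ)` of the structure `μ` of `𝐀21`. -/
theorem A21_not_deg_A20 (μ lam : Bil 5)
    (hμ : ∀ i j : Fin 5, μ (e i) (e j) = tblA21 i j)
    (hlam : ∀ i j : Fin 5, lam (e i) (e j) = tblA20 i j) :
    lam ∉ closure (orbit μ) := by
  set f : Bil 5 → ℂ := fun ν =>
    ν (e 0) (e 0) 2 * ν (e 0) (e 1) 3 - ν (e 0) (e 0) 3 * ν (e 0) (e 1) 2 with hf
  have hc1 : ∀ (x y : Vn 5) (k : Fin 5), Continuous fun ν : Bil 5 => ν x y k := by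
    intro x y k
    exact (continuous_apply k).comp
      ((ContinuousLinearMap.apply ℂ (Vn 5) y).continuous.comp
        (ContinuousLinearMap.apply ℂ (Vn 5 →L[ℂ] Vn 5) x).continuous)
  have hcont : Continuous f := by
    apply Continuous.sub <;> exact ((hc1 _ _ _).mul (hc1 _ _ _))
  have horb : orbit μ ⊆ f ⁻¹' {0} := by
    rintro ν ⟨g, rfl⟩
    have h1 : (act g μ) (e 0) (e 0) =
        ((g.symm (e 0)) 0 * (g.symm (e 0)) 3 + (g.symm (e 0)) 1 * (g.symm (e 0)) 2 +
          (g.symm (e 0)) 2 * (g.symm (e 0)) 1 + (g.symm (e 0)) 3 * (g.symm (e 0)) 0) •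
          g (e 4) := by
      rw [act_apply, mu_eq μ hμ, map_smul]
    have h2 : (act g μ) (e 0) (e 1) =
        ((g.symm (e 0)) 0 * (g.symm (e 1)) 3 + (g.symm (e 0)) 1 * (g.symm (e 1)) 2 +
          (g.symm (e 0)) 2 * (g.symm (e 1)) 1 + (g.symm (e 0)) 3 * (g.symm (e 1)) 0) •
          g (e 4) := by
      rw [act_apply, mu_eq μ hμ, map_smul]
    simp only [Set.mem_preimage, Set.mem_singleton_iff, hf, h1, h2, Pi.smul_apply,
      smul_eq_mul]
    ring
  have hclosed : closure (orbit μ) ⊆ f ⁻¹' {0} :=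
    closure_minimal horb (IsClosed.preimage hcont isClosed_singleton)
  intro hmem
  have h0 : f lam = 0 := hclosed hmem
  have h1 : f lam = 1 := by
    simp only [hf]
    rw [hlam 0 0, hlam 0 1]
    simp [tblA20, e, Pi.single_apply]
  rw [h1] at h0
  exact one_ne_zero h0
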